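/- Let I = (A, P1, P2, M1, k) be an ISR instance such that P2 admits a perfect stable matching. Let A_1 = {a_1, …, a_x} be the set of agents unmatched by M1 (x is even, since |A| is even because P2 admits a perfect matching). Construct I' = (A', P1', P2', M1', k') as follows: A' = A ∪ {a'_1, …, a'_x}; in both P1' and P2' each new agent a'_i accepts exactly two agents, with preference list a_i ≻ a'_{i+1} if i is odd and a_i ≻ a'_{i−1} if i is even, and a'_i is appended at the end of a_i's preference list in both profiles, while all other preferences are unchanged; M1' = M1 ∪ {{a_i, a'_i} : i ∈ [x]}; k' = k + 3x/2. Then: (a) M1' is a perfect matching that is stable with respect to P1'; (b) P2' admits a perfect stable matching; and (c) there is a matching M2 stable with respect to P2 with |M1 △ M2| ≤ k if and only if there is a matching M2' stable with respect to P2' with |M1' △ M2'| ≤ k'. -/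
import Mathlib


/-- A preference profile: each agent has a finite set of acceptable agents and a
rank function encoding its preference list (lower rank = more preferred). -/
structure PrefProfile (A : Type*) where
  acc : A → Finset A
  rank : A → A → ℕ

namespace PrefProfile

variable {A : Type*} (P : PrefProfile A)

/-- Agent `a` strictly prefers `b` to `c`. -/
def Prefers (a b c : A) : Prop := P.rank a b < P.rank a c

/-- A lawful SR(-T) profile: no agent accepts itself and acceptability is symmetric. -/
def Lawful : Prop := (∀ a, a ∉ P.acc a) ∧ (∀ a b : A, b ∈ P.acc a → a ∈ P.acc b)

/-- Strict preferences: no ties among acceptable agents. -/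
def Strict : Prop := ∀ a : A, ∀ b ∈ P.acc a, ∀ c ∈ P.acc a, P.rank a b = P.rank a c → b = c

end PrefProfile

/-- A finite set of unordered pairs of agents is a matching if its pairs are
non-diagonal and pairwise disjoint. -/
def IsMatching {A : Type*} (M : Finset (Sym2 A)) : Prop :=
  (∀ p ∈ M, ¬ p.IsDiag) ∧ ∀ a b c : A, s(a, b) ∈ M → s(a, c) ∈ M → b = c

/-- `a` is matched in `M`. -/
def Matched {A : Type*} (M : Finset (Sym2 A)) (a : A) : Prop := ∃ b, s(a, b) ∈ M

/-- A matching is perfect if it matches all agents. -/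
def IsPerfect {A : Type*} (M : Finset (Sym2 A)) : Prop := ∀ a, Matched M a

/-- All pairs of `M` consist of mutually acceptable agents w.r.t. `P`. -/
def Acceptable {A : Type*} (P : PrefProfile A) (M : Finset (Sym2 A)) : Prop :=
  ∀ a b : A, s(a, b) ∈ M → b ∈ P.acc a

/-- The pair `{a, b}` blocks `M` w.r.t. `P`: `a` and `b` accept each other, and each
of them is either unmatched or strictly prefers the other to its partner. -/
def Blocks {A : Type*} (P : PrefProfile A) (M : Finset (Sym2 A)) (a b : A) : Prop :=
  b ∈ P.acc a ∧ a ∈ P.acc b ∧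
    (∀ c, s(a, c) ∈ M → P.Prefers a b c) ∧ (∀ c, s(b, c) ∈ M → P.Prefers b a c)

/-- `M` is a (weakly) stable matching for `P`. -/
def IsStable {A : Type*} (P : PrefProfile A) (M : Finset (Sym2 A)) : Prop :=
  IsMatching M ∧ Acceptable P M ∧ ∀ a b : A, ¬ Blocks P M a b

section LoneWolf

variable {A : Type*}

lemma mem_swap {M : Finset (Sym2 A)} {a b : A} (h : s(a, b) ∈ M) : s(b, a) ∈ M := by
  rwa [Sym2.eq_swap]

/-- Step lemma for the alternating-path argument. -/
lemma lw_step (P : PrefProfile A) (hs : P.Strict) {M N : Finset (Sym2 A)}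
    (hM : IsStable P M) (hNacc : Acceptable P N) {x y : A} (hxy : s(x, y) ∈ N)
    (hx : ∀ c, s(x, c) ∈ M → P.Prefers x y c) :
    ∃ z, s(y, z) ∈ M ∧ P.Prefers y z x := by
  by_contra hno
  push_neg at hno
  apply hM.2.2 x y
  refine ⟨hNacc x y hxy, hNacc y x (mem_swap hxy), hx, ?_⟩
  intro c hc
  have hcy : c ∈ P.acc y := hM.2.1 y c hc
  have hxacc : x ∈ P.acc y := hNacc y x (mem_swap hxy)
  have hne : x ≠ c := by
    rintro rfl
    exact absurd (hx y (mem_swap hc)) (lt_irrefl _)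
  have h1 : ¬ P.rank y c < P.rank y x := hno c hc
  have h2 : P.rank y x ≠ P.rank y c := fun h => hne (hs y x hxacc c hcy h)
  exact lt_of_le_of_ne (not_lt.1 h1) h2

/-- The lone wolf theorem for stable roommates: if some stable matching is
perfect, then every stable matching is perfect. -/
theorem lone_wolf [Finite A] (P : PrefProfile A) (hs : P.Strict)
    {M M' : Finset (Sym2 A)} (hM : IsStable P M) (hM' : IsStable P M')
    (hp' : IsPerfect M') : IsPerfect M := by
  classical
  intro a
  by_contra ha
  set E : ℕ → Finset (Sym2 A) := fun i => if i % 2 = 0 then M' else M with hE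
  have hEstab : ∀ i, IsStable P (E i) := by
    intro i; simp only [hE]; split <;> assumption
  let f : ℕ → A × A := fun n => Nat.rec (a, Classical.choose (hp' a))
    (fun n p => (p.2,
      if h : ∃ z, s(p.2, z) ∈ E (n + 1) ∧ P.Prefers p.2 z p.1 then Classical.choose h
      else a)) n
  set b : ℕ → A := fun n => (f n).1 with hb
  have hb0 : b 0 = a := rfl
  have key : ∀ n, s(b n, b (n + 1)) ∈ E n ∧
      (∀ m, n = m + 1 → P.Prefers (b n) (b (n + 1)) (b m)) := by
    intro n
    induction n using Nat.strong_induction_on with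
    | _ n ih =>
      match n with
      | 0 =>
        constructor
        · have h1 : b (0 + 1) = Classical.choose (hp' a) := rfl
          rw [hb0, h1]
          have hE0 : E 0 = M' := by simp [hE]
          rw [hE0]
          exact Classical.choose_spec (hp' a)
        · intro m hm; omega
      | (n + 1) =>
        have ihn := ih n (by omega)
        have hex : ∃ z, s(b (n + 1), z) ∈ E (n + 1) ∧ P.Prefers (b (n + 1)) z (b n) := by
          refine lw_step P hs (hEstab (n + 1)) (hEstab n).2.1 ihn.1 ?_
          intro c hc
          rcases n with _ | m
          · exfalso
            apply ha
            refine ⟨c, ?_⟩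
            rw [← hb0]
            have hE1 : E (0 + 1) = M := by simp [hE]
            rwa [hE1] at hc
          · have hEeq : E (m + 1 + 1) = E m := if_congr (by omega) rfl rfl
            rw [hEeq] at hc
            have h2 : s(b (m + 1), b m) ∈ E m := mem_swap (ih m (by omega)).1
            have hc' : c = b m := (hEstab m).1.2 _ _ _ hc h2
            rw [hc']
            exact ihn.2 m rfl
        have hdef : b (n + 2) = Classical.choose hex := by
          have h1 : b (n + 2) =
              if h : ∃ z, s(b (n + 1), z) ∈ E (n + 1) ∧ P.Prefers (b (n + 1)) z (b n)
              then Classical.choose h else a := rfl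
          rw [h1, dif_pos hex]
        obtain ⟨h1, h2⟩ := Classical.choose_spec hex
        rw [← hdef] at h1 h2
        exact ⟨h1, fun m hm => by cases hm; exact h2⟩
  have hmatch : ∀ m, Matched M (b (m + 1)) := by
    intro m
    by_cases h : m % 2 = 0
    · have hEm : E (m + 1) = M := by simp only [hE]; rw [if_neg (by omega)]
      exact ⟨b (m + 2), by rw [← hEm]; exact (key (m + 1)).1⟩
    · have hEm : E m = M := by simp only [hE]; rw [if_neg (by omega)]
      exact ⟨b m, mem_swap (by rw [← hEm]; exact (key m).1)⟩
  have hrep : ∃ j, ∃ i, i < j ∧ b i = b j := by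
    obtain ⟨x, y, hxy, hbe⟩ := Finite.exists_ne_map_eq_of_infinite b
    rcases hxy.lt_or_gt with h | h
    · exact ⟨y, x, h, hbe⟩
    · exact ⟨x, y, h, hbe.symm⟩
  obtain ⟨i, hij, heq⟩ := Nat.find_spec hrep
  have hmin : ∀ m, m < Nat.find hrep → ¬ ∃ i, i < m ∧ b i = b m :=
    fun m hm => Nat.find_min hrep hm
  rcases i with _ | i'
  · obtain ⟨j', hj'⟩ : ∃ j', Nat.find hrep = j' + 1 := ⟨Nat.find hrep - 1, by omega⟩
    rw [hj'] at heq
    exact ha (by rw [hb0] at heq; rw [heq]; exact hmatch j')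
  · obtain ⟨j', hj'⟩ : ∃ j', Nat.find hrep = j' + 1 := ⟨Nat.find hrep - 1, by omega⟩
    rw [hj'] at heq hij hmin
    have hmin' : ∀ m, m < j' + 1 → ¬ ∃ i, i < m ∧ b i = b m := by
      intro m hm
      exact Nat.find_min hrep (by omega)
    have hij' : i' < j' := by omega
    by_cases hpar : i' % 2 = j' % 2
    · have hEeq : E i' = E j' := if_congr (by omega) rfl rfl
      have e1 : s(b (i' + 1), b i') ∈ E j' := by
        rw [← hEeq]; exact mem_swap (key i').1
      have e2 : s(b (j' + 1), b j') ∈ E j' := mem_swap (key j').1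
      rw [heq] at e1
      have hbe : b i' = b j' := (hEstab j').1.2 _ _ _ e1 e2
      exact hmin' j' (by omega) ⟨i', hij', hbe⟩
    · have hEeq : E (i' + 1) = E j' := if_congr (by omega) rfl rfl
      have e1 : s(b (i' + 1), b (i' + 2)) ∈ E j' := by
        rw [← hEeq]; exact (key (i' + 1)).1
      have e2 : s(b (j' + 1), b j') ∈ E j' := mem_swap (key j').1
      rw [heq] at e1
      have hbe : b (i' + 2) = b j' := (hEstab j').1.2 _ _ _ e1 e2
      rcases lt_trichotomy (i' + 2) j' with h | h | h
      · exact hmin' j' (by omega) ⟨i' + 2, h, hbe⟩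
      · omega
      · have hjeq : j' = i' + 1 := by omega
        have hdiag := (hEstab (i' + 1)).1.1 _ (key (i' + 1)).1
        apply hdiag
        rw [Sym2.mk_isDiag_iff]
        rw [hjeq] at hbe
        exact hbe.symm

end LoneWolf

noncomputable section
open Classical

variable {A : Type*} [Fintype A] [DecidableEq A]

/-- The extension of a profile `P` on `A` by `x = 2t` new dummy agents
`a'_1, …, a'_x` (represented as pairs `(j, b) : Fin t × Bool`, consecutive dummies
`a'_{2j+1}, a'_{2j+2}` being `(j, false)` and `(j, true)`), where `en (j, b)` is the
corresponding agent `a_i` unmatched by `M1`: each new agent `(j, b)` accepts exactly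
`en (j, b)` (its first choice) and its buddy `(j, !b)` (its second choice), the new
agent `(j, b)` is appended at the very end of the preference list of `en (j, b)`,
and all other preferences are unchanged. -/
def extProfile6 (P : PrefProfile A) (t : ℕ) (en : Fin t × Bool → A) :
    PrefProfile (A ⊕ Fin t × Bool) where
  acc x :=
    match x with
    | Sum.inl a =>
        (P.acc a).image Sum.inl ∪
          (Finset.univ.filter fun p : Fin t × Bool => en p = a).image Sum.inr
    | Sum.inr p => {Sum.inl (en p), Sum.inr (p.1, !p.2)}
  rank x y :=
    match x, y with
    | Sum.inl a, Sum.inl b => P.rank a b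
    | Sum.inl a, Sum.inr _ => ((P.acc a).sup (P.rank a)) + 1
    | Sum.inr _, Sum.inl _ => 0
    | Sum.inr _, Sum.inr _ => 1

/-- `M1' = M1 ∪ {{a_i, a'_i} : i ∈ [x]}`. -/
def extM6 (M1 : Finset (Sym2 A)) (t : ℕ) (en : Fin t × Bool → A) :
    Finset (Sym2 (A ⊕ Fin t × Bool)) :=
  M1.image (Sym2.map Sum.inl) ∪
    Finset.univ.image fun p : Fin t × Bool => s(Sum.inl (en p), Sum.inr p)



set_option linter.unusedSectionVars false
section Ext

variable {t : ℕ} {en : Fin t × Bool → A}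

@[simp] lemma acc_ll {P : PrefProfile A} {a b : A} :
    Sum.inl b ∈ (extProfile6 P t en).acc (Sum.inl a) ↔ b ∈ P.acc a := by
  simp [extProfile6]

@[simp] lemma acc_lr {P : PrefProfile A} {a : A} {p : Fin t × Bool} :
    Sum.inr p ∈ (extProfile6 P t en).acc (Sum.inl a) ↔ en p = a := by
  simp [extProfile6]

@[simp] lemma acc_rl {P : PrefProfile A} {a : A} {p : Fin t × Bool} :
    Sum.inl a ∈ (extProfile6 P t en).acc (Sum.inr p) ↔ a = en p := by
  simp [extProfile6]

@[simp] lemma acc_rr {P : PrefProfile A} {p q : Fin t × Bool} :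
    Sum.inr q ∈ (extProfile6 P t en).acc (Sum.inr p) ↔ q = (p.1, !p.2) := by
  simp [extProfile6]

@[simp] lemma rank_ll {P : PrefProfile A} {a b : A} :
    (extProfile6 P t en).rank (Sum.inl a) (Sum.inl b) = P.rank a b := rfl

@[simp] lemma rank_lr {P : PrefProfile A} {a : A} {p : Fin t × Bool} :
    (extProfile6 P t en).rank (Sum.inl a) (Sum.inr p) = ((P.acc a).sup (P.rank a)) + 1 := rfl

@[simp] lemma rank_rl {P : PrefProfile A} {a : A} {p : Fin t × Bool} :
    (extProfile6 P t en).rank (Sum.inr p) (Sum.inl a) = 0 := rfl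

@[simp] lemma rank_rr {P : PrefProfile A} {p q : Fin t × Bool} :
    (extProfile6 P t en).rank (Sum.inr p) (Sum.inr q) = 1 := rfl

/-- The canonical lift of a stable matching of the original instance. -/
def liftMat (M : Finset (Sym2 A)) (t : ℕ) (en : Fin t × Bool → A) :
    Finset (Sym2 (A ⊕ Fin t × Bool)) :=
  M.image (Sym2.map Sum.inl) ∪
    ((Finset.univ.filter fun p : Fin t × Bool => ¬ Matched M (en p)).image
      fun p => s(Sum.inl (en p), Sum.inr p)) ∪
    ((Finset.univ.filter fun j : Fin t =>
        Matched M (en (j, false)) ∧ Matched M (en (j, true))).image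
      fun j => s(Sum.inr (j, false), Sum.inr (j, true)))

lemma mem_image_map_inl {M : Finset (Sym2 A)} {x y : A ⊕ Fin t × Bool} :
    s(x, y) ∈ M.image (Sym2.map Sum.inl) ↔
      ∃ a b : A, x = Sum.inl a ∧ y = Sum.inl b ∧ s(a, b) ∈ M := by
  constructor
  · intro h
    obtain ⟨e, he, hmap⟩ := Finset.mem_image.1 h
    induction e using Sym2.ind with
    | _ u v =>
      rw [Sym2.map_pair_eq, Sym2.eq_iff] at hmap
      rcases hmap with ⟨h1, h2⟩ | ⟨h1, h2⟩
      · exact ⟨u, v, h1.symm, h2.symm, he⟩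
      · exact ⟨v, u, h2.symm, h1.symm, mem_swap he⟩
  · rintro ⟨a, b, rfl, rfl, hab⟩
    exact Finset.mem_image.2 ⟨s(a, b), hab, by rw [Sym2.map_pair_eq]⟩

lemma mem_lift_ll {M : Finset (Sym2 A)} {a b : A} :
    s(Sum.inl a, Sum.inl b) ∈ liftMat M t en ↔ s(a, b) ∈ M := by
  unfold liftMat
  simp only [Finset.mem_union]
  constructor
  · rintro ((h | h) | h)
    · obtain ⟨a', b', h1, h2, h3⟩ := mem_image_map_inl.1 h
      obtain rfl := Sum.inl.inj h1
      obtain rfl := Sum.inl.inj h2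
      exact h3
    · obtain ⟨p, _, hp⟩ := Finset.mem_image.1 h
      rw [Sym2.eq_iff] at hp
      simp at hp
    · obtain ⟨j, _, hj⟩ := Finset.mem_image.1 h
      rw [Sym2.eq_iff] at hj
      simp at hj
  · intro h
    exact Or.inl (Or.inl (mem_image_map_inl.2 ⟨a, b, rfl, rfl, h⟩))

lemma mem_lift_lr {M : Finset (Sym2 A)} {a : A} {p : Fin t × Bool} :
    s(Sum.inl a, Sum.inr p) ∈ liftMat M t en ↔ a = en p ∧ ¬ Matched M (en p) := by
  unfold liftMat
  simp only [Finset.mem_union]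
  constructor
  · rintro ((h | h) | h)
    · obtain ⟨a', b', h1, h2, h3⟩ := mem_image_map_inl.1 h
      simp at h2
    · obtain ⟨q, hq, hq2⟩ := Finset.mem_image.1 h
      rw [Sym2.eq_iff] at hq2
      simp only [Finset.mem_filter] at hq
      rcases hq2 with ⟨h1, h2⟩ | ⟨h1, h2⟩
      · obtain rfl := Sum.inr.inj h2
        exact ⟨(Sum.inl.inj h1).symm, hq.2⟩
      · simp at h1
    · obtain ⟨j, _, hj⟩ := Finset.mem_image.1 h
      rw [Sym2.eq_iff] at hj
      simp at hj
  · rintro ⟨rfl, hm⟩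
    exact Or.inl (Or.inr (Finset.mem_image.2 ⟨p, Finset.mem_filter.2 ⟨Finset.mem_univ _, hm⟩, rfl⟩))

lemma mem_lift_rr {M : Finset (Sym2 A)} {p q : Fin t × Bool} :
    s(Sum.inr p, Sum.inr q) ∈ liftMat M t en ↔
      q = (p.1, !p.2) ∧ Matched M (en p) ∧ Matched M (en q) := by
  unfold liftMat
  simp only [Finset.mem_union]
  constructor
  · rintro ((h | h) | h)
    · obtain ⟨a', b', h1, h2, h3⟩ := mem_image_map_inl.1 h
      simp at h1
    · obtain ⟨q', hq, hq2⟩ := Finset.mem_image.1 h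
      rw [Sym2.eq_iff] at hq2
      simp at hq2
    · obtain ⟨j, hj, hj2⟩ := Finset.mem_image.1 h
      simp only [Finset.mem_filter] at hj
      rw [Sym2.eq_iff] at hj2
      rcases hj2 with ⟨h1, h2⟩ | ⟨h1, h2⟩
      · obtain rfl := Sum.inr.inj h1
        obtain rfl := Sum.inr.inj h2
        exact ⟨rfl, hj.2.1, hj.2.2⟩
      · obtain rfl := Sum.inr.inj h1
        obtain rfl := Sum.inr.inj h2
        exact ⟨rfl, hj.2.2, hj.2.1⟩
  · rintro ⟨rfl, hp, hq⟩
    refine Or.inr (Finset.mem_image.2 ⟨p.1, Finset.mem_filter.2 ⟨Finset.mem_univ _, ?_, ?_⟩, ?_⟩)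
    · cases hb : p.2
      · rwa [show (p.1, false) = p by rw [← hb]]
      · rwa [show (p.1, false) = (p.1, !p.2) by rw [hb]; rfl]
    · cases hb : p.2
      · rwa [show (p.1, true) = (p.1, !p.2) by rw [hb]; rfl]
      · rwa [show (p.1, true) = p by rw [← hb]]
    · cases hb : p.2
      · rw [show p = (p.1, false) by rw [← hb], show ((p.1, false).1, !(p.1, false).2) = (p.1, true) by simp]
      · rw [show p = (p.1, true) by rw [← hb], show ((p.1, true).1, !(p.1, true).2) = (p.1, false) by simp]
        rw [Sym2.eq_swap]

end Ext

section Ext2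

set_option linter.unusedSectionVars false

variable {t : ℕ} {en : Fin t × Bool → A}

lemma mem_lift_rl {M : Finset (Sym2 A)} {a : A} {p : Fin t × Bool} :
    s(Sum.inr p, Sum.inl a) ∈ liftMat M t en ↔ a = en p ∧ ¬ Matched M (en p) := by
  rw [Sym2.eq_swap]; exact mem_lift_lr

lemma lift_stable (P : PrefProfile A) {M : Finset (Sym2 A)} (hM : IsStable P M)
    (hinj : Function.Injective en) : IsStable (extProfile6 P t en) (liftMat M t en) := by
  obtain ⟨⟨hnd, hfun⟩, hacc, hnb⟩ := hM
  refine ⟨⟨?_, ?_⟩, ?_, ?_⟩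
  · -- non-diagonal
    intro e he
    induction e using Sym2.ind with
    | _ x y =>
      rw [Sym2.mk_isDiag_iff]
      rintro rfl
      match x, he with
      | Sum.inl a, he =>
        exact hnd _ (mem_lift_ll.1 he) (Sym2.mk_isDiag_iff.2 rfl)
      | Sum.inr p, he =>
        have := (mem_lift_rr.1 he).1
        have : p.2 = !p.2 := congrArg Prod.snd this
        simp at this
  · -- functionality
    intro x y z hxy hxz
    match x, y, z, hxy, hxz with
    | Sum.inl a, Sum.inl b, Sum.inl c, hxy, hxz =>
      rw [hfun a b c (mem_lift_ll.1 hxy) (mem_lift_ll.1 hxz)]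
    | Sum.inl a, Sum.inl b, Sum.inr p, hxy, hxz =>
      obtain ⟨rfl, hnm⟩ := mem_lift_lr.1 hxz
      exact absurd ⟨b, mem_lift_ll.1 hxy⟩ hnm
    | Sum.inl a, Sum.inr p, Sum.inl c, hxy, hxz =>
      obtain ⟨rfl, hnm⟩ := mem_lift_lr.1 hxy
      exact absurd ⟨c, mem_lift_ll.1 hxz⟩ hnm
    | Sum.inl a, Sum.inr p, Sum.inr q, hxy, hxz =>
      obtain ⟨rfl, -⟩ := mem_lift_lr.1 hxy
      obtain ⟨heq, -⟩ := mem_lift_lr.1 hxz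
      rw [hinj heq]
    | Sum.inr p, Sum.inl a, Sum.inl b, hxy, hxz =>
      obtain ⟨rfl, -⟩ := mem_lift_rl.1 hxy
      obtain ⟨heq, -⟩ := mem_lift_rl.1 hxz
      rw [heq]
    | Sum.inr p, Sum.inl a, Sum.inr q, hxy, hxz =>
      obtain ⟨rfl, hnm⟩ := mem_lift_rl.1 hxy
      exact absurd (mem_lift_rr.1 hxz).2.1 hnm
    | Sum.inr p, Sum.inr q, Sum.inl a, hxy, hxz =>
      obtain ⟨rfl, hnm⟩ := mem_lift_rl.1 hxz
      exact absurd (mem_lift_rr.1 hxy).2.1 hnm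
    | Sum.inr p, Sum.inr q, Sum.inr r, hxy, hxz =>
      rw [(mem_lift_rr.1 hxy).1, (mem_lift_rr.1 hxz).1]
  · -- acceptable
    intro x y hxy
    match x, y, hxy with
    | Sum.inl a, Sum.inl b, hxy => exact acc_ll.2 (hacc a b (mem_lift_ll.1 hxy))
    | Sum.inl a, Sum.inr p, hxy => exact acc_lr.2 (mem_lift_lr.1 hxy).1.symm
    | Sum.inr p, Sum.inl a, hxy => exact acc_rl.2 (mem_lift_rl.1 hxy).1
    | Sum.inr p, Sum.inr q, hxy => exact acc_rr.2 (mem_lift_rr.1 hxy).1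
  · -- no blocking pair
    rintro x y ⟨hac1, hac2, h3, h4⟩
    match x, y, hac1, hac2, h3, h4 with
    | Sum.inl a, Sum.inl b, hac1, hac2, h3, h4 =>
      refine hnb a b ⟨acc_ll.1 hac1, acc_ll.1 hac2, ?_, ?_⟩
      · intro c hc
        exact h3 (Sum.inl c) (mem_lift_ll.2 hc)
      · intro c hc
        exact h4 (Sum.inl c) (mem_lift_ll.2 hc)
    | Sum.inl a, Sum.inr p, hac1, hac2, h3, h4 =>
      obtain rfl := (acc_lr.1 hac1).symm
      by_cases hm : Matched M (en p)
      · obtain ⟨c, hc⟩ := hm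
        have hpref := h3 (Sum.inl c) (mem_lift_ll.2 hc)
        have hle : P.rank (en p) c ≤ (P.acc (en p)).sup (P.rank (en p)) :=
          Finset.le_sup (hacc _ _ hc)
        have : ((P.acc (en p)).sup (P.rank (en p))) + 1 < P.rank (en p) c := hpref
        omega
      · have hpref := h4 (Sum.inl (en p)) (mem_lift_rl.2 ⟨rfl, hm⟩)
        exact absurd hpref (lt_irrefl 0)
    | Sum.inr p, Sum.inl a, hac1, hac2, h3, h4 =>
      obtain rfl := acc_rl.1 hac1
      by_cases hm : Matched M (en p)
      · obtain ⟨c, hc⟩ := hm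
        have hpref := h4 (Sum.inl c) (mem_lift_ll.2 hc)
        have hle : P.rank (en p) c ≤ (P.acc (en p)).sup (P.rank (en p)) :=
          Finset.le_sup (hacc _ _ hc)
        have : ((P.acc (en p)).sup (P.rank (en p))) + 1 < P.rank (en p) c := hpref
        omega
      · have hpref := h3 (Sum.inl (en p)) (mem_lift_rl.2 ⟨rfl, hm⟩)
        exact absurd hpref (lt_irrefl 0)
    | Sum.inr p, Sum.inr q, hac1, hac2, h3, h4 =>
      obtain rfl := acc_rr.1 hac1
      by_cases hp : Matched M (en p)
      · by_cases hq : Matched M (en (p.1, !p.2))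
        · have hpref := h3 (Sum.inr (p.1, !p.2)) (mem_lift_rr.2 ⟨rfl, hp, hq⟩)
          exact absurd hpref (lt_irrefl 1)
        · have hpref := h4 (Sum.inl (en (p.1, !p.2))) (mem_lift_rl.2 ⟨rfl, hq⟩)
          exact absurd hpref (by simp [PrefProfile.Prefers])
      · have hpref := h3 (Sum.inl (en p)) (mem_lift_rl.2 ⟨rfl, hp⟩)
        exact absurd hpref (by simp [PrefProfile.Prefers])

lemma lift_perfect {M : Finset (Sym2 A)} (hp : IsPerfect M) :
    IsPerfect (liftMat M t en) := by
  intro x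
  match x with
  | Sum.inl a =>
    obtain ⟨c, hc⟩ := hp a
    exact ⟨Sum.inl c, mem_lift_ll.2 hc⟩
  | Sum.inr p =>
    exact ⟨Sum.inr (p.1, !p.2), mem_lift_rr.2 ⟨rfl, hp _, hp _⟩⟩

end Ext2

section Ext3

set_option linter.unusedSectionVars false

variable {t : ℕ} {en : Fin t × Bool → A}

lemma mem_ext_ll {M1 : Finset (Sym2 A)} {a b : A} :
    s(Sum.inl a, Sum.inl b) ∈ extM6 M1 t en ↔ s(a, b) ∈ M1 := by
  unfold extM6
  simp only [Finset.mem_union]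
  constructor
  · rintro (h | h)
    · obtain ⟨a', b', h1, h2, h3⟩ := mem_image_map_inl.1 h
      obtain rfl := Sum.inl.inj h1
      obtain rfl := Sum.inl.inj h2
      exact h3
    · obtain ⟨p, _, hp⟩ := Finset.mem_image.1 h
      rw [Sym2.eq_iff] at hp
      simp at hp
  · intro h
    exact Or.inl (mem_image_map_inl.2 ⟨a, b, rfl, rfl, h⟩)

lemma mem_ext_lr {M1 : Finset (Sym2 A)} {a : A} {p : Fin t × Bool} :
    s(Sum.inl a, Sum.inr p) ∈ extM6 M1 t en ↔ a = en p := by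
  unfold extM6
  simp only [Finset.mem_union]
  constructor
  · rintro (h | h)
    · obtain ⟨a', b', h1, h2, h3⟩ := mem_image_map_inl.1 h
      simp at h2
    · obtain ⟨q, _, hq⟩ := Finset.mem_image.1 h
      rw [Sym2.eq_iff] at hq
      rcases hq with ⟨h1, h2⟩ | ⟨h1, h2⟩
      · obtain rfl := Sum.inr.inj h2
        exact (Sum.inl.inj h1).symm
      · simp at h1
  · rintro rfl
    exact Or.inr (Finset.mem_image.2 ⟨p, Finset.mem_univ _, rfl⟩)

lemma mem_ext_rr {M1 : Finset (Sym2 A)} {p q : Fin t × Bool} :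
    s(Sum.inr p, Sum.inr q) ∉ extM6 M1 t en := by
  unfold extM6
  simp only [Finset.mem_union]
  rintro (h | h)
  · obtain ⟨a', b', h1, h2, h3⟩ := mem_image_map_inl.1 h
    simp at h1
  · obtain ⟨q', _, hq⟩ := Finset.mem_image.1 h
    rw [Sym2.eq_iff] at hq
    simp at hq

/-- The projection of a matching on the extended instance back to `A`. -/
def projM (M2' : Finset (Sym2 (A ⊕ Fin t × Bool))) : Finset (Sym2 A) :=
  Finset.univ.filter fun e => Sym2.map Sum.inl e ∈ M2'

lemma mem_projM {M2' : Finset (Sym2 (A ⊕ Fin t × Bool))} {a b : A} :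
    s(a, b) ∈ projM M2' ↔ s(Sum.inl a, Sum.inl b) ∈ M2' := by
  simp [projM, Sym2.map_pair_eq]

lemma proj_stable (P : PrefProfile A) {M2' : Finset (Sym2 (A ⊕ Fin t × Bool))}
    (hM2' : IsStable (extProfile6 P t en) M2') :
    IsStable P (projM M2') := by
  obtain ⟨⟨hnd, hfun⟩, hacc, hnb⟩ := hM2'
  refine ⟨⟨?_, ?_⟩, ?_, ?_⟩
  · intro e he
    induction e using Sym2.ind with
    | _ x y =>
      rw [Sym2.mk_isDiag_iff]
      rintro rfl
      exact hnd _ (mem_projM.1 he) (Sym2.mk_isDiag_iff.2 rfl)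
  · intro a b c hab hac
    exact Sum.inl.inj (hfun _ _ _ (mem_projM.1 hab) (mem_projM.1 hac))
  · intro a b hab
    exact acc_ll.1 (hacc _ _ (mem_projM.1 hab))
  · rintro a b ⟨hac1, hac2, h3, h4⟩
    refine hnb (Sum.inl a) (Sum.inl b) ⟨acc_ll.2 hac1, acc_ll.2 hac2, ?_, ?_⟩
    · intro c hc
      match c, hc with
      | Sum.inl c, hc => exact h3 c (mem_projM.2 hc)
      | Sum.inr p, hc =>
        show P.rank a b < (P.acc a).sup (P.rank a) + 1
        exact Nat.lt_succ_of_le (Finset.le_sup hac1)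
    · intro c hc
      match c, hc with
      | Sum.inl c, hc => exact h4 c (mem_projM.2 hc)
      | Sum.inr p, hc =>
        show P.rank b a < (P.acc b).sup (P.rank b) + 1
        exact Nat.lt_succ_of_le (Finset.le_sup hac2)

/-- In a stable matching of the extended instance in which every original agent is
matched to an original agent, every dummy is matched to its buddy. -/
lemma buddy_matched (P : PrefProfile A) {M2' : Finset (Sym2 (A ⊕ Fin t × Bool))}
    (hM2' : IsStable (extProfile6 P t en) M2')
    (hall : ∀ p : Fin t × Bool, Matched (projM M2') (en p))
    (p : Fin t × Bool) : s(Sum.inr p, Sum.inr (p.1, !p.2)) ∈ M2' := by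
  obtain ⟨⟨hnd, hfun⟩, hacc, hnb⟩ := hM2'
  have hm : ∀ q : Fin t × Bool, ∀ x, s(Sum.inr q, x) ∈ M2' → x = Sum.inr (q.1, !q.2) := by
    intro q x hx
    have hx' := hacc _ _ hx
    rw [show (extProfile6 P t en).acc (Sum.inr q) = {Sum.inl (en q), Sum.inr (q.1, !q.2)} from rfl] at hx'
    simp only [Finset.mem_insert, Finset.mem_singleton] at hx'
    rcases hx' with rfl | rfl
    · obtain ⟨c, hc⟩ := hall q
      have hc' := mem_projM.1 hc
      exact absurd (hfun (Sum.inl (en q)) (Sum.inr q) (Sum.inl c) (mem_swap hx) hc') (by simp)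
    · rfl
  by_contra hcon
  have hump : ∀ x, s(Sum.inr p, x) ∉ M2' := by
    intro x hx
    rw [hm p x hx] at hx
    exact hcon hx
  have humq : ∀ x, s(Sum.inr (p.1, !p.2), x) ∉ M2' := by
    intro x hx
    have := hm _ _ hx
    simp only [Bool.not_not] at this
    rw [this] at hx
    exact hcon (mem_swap hx)
  refine hnb (Sum.inr p) (Sum.inr (p.1, !p.2)) ⟨acc_rr.2 rfl, acc_rr.2 (by simp), ?_, ?_⟩
  · intro c hc; exact absurd hc (hump c)
  · intro c hc; exact absurd hc (humq c)

end Ext3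

section Ext4

set_option linter.unusedSectionVars false

variable {t : ℕ} {en : Fin t × Bool → A}

/-- The set of agent–dummy pairs. -/
def U2 (t : ℕ) (en : Fin t × Bool → A) : Finset (Sym2 (A ⊕ Fin t × Bool)) :=
  Finset.univ.image fun p : Fin t × Bool => s(Sum.inl (en p), Sum.inr p)

/-- The set of buddy pairs. -/
def U3 (A : Type*) [DecidableEq A] (t : ℕ) : Finset (Sym2 (A ⊕ Fin t × Bool)) :=
  Finset.univ.image fun j : Fin t => s(Sum.inr (j, false), Sum.inr (j, true))

lemma card_U2_le : (U2 t en).card ≤ 2 * t := by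
  calc (U2 t en).card ≤ (Finset.univ : Finset (Fin t × Bool)).card := Finset.card_image_le
    _ = 2 * t := by simp [Finset.card_univ, mul_comm]

lemma card_U3_le : (U3 A t).card ≤ t := by
  calc (U3 A t).card ≤ (Finset.univ : Finset (Fin t)).card := Finset.card_image_le
    _ = t := by simp

lemma card_U2 : (U2 t en).card = 2 * t := by
  rw [U2, Finset.card_image_of_injective _ ?_, Finset.card_univ]
  · simp [mul_comm]
  · intro p q h
    rw [Sym2.eq_iff] at h
    rcases h with ⟨-, h2⟩ | ⟨h1, -⟩
    · exact Sum.inr.inj h2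
    · simp at h1

lemma card_U3 : (U3 A t).card = t := by
  rw [U3, Finset.card_image_of_injective _ ?_, Finset.card_univ, Fintype.card_fin]
  intro i j h
  rw [Sym2.eq_iff] at h
  rcases h with ⟨h1, -⟩ | ⟨h1, -⟩
  · exact congrArg Prod.fst (Sum.inr.inj h1)
  · have := Sum.inr.inj h1
    simp at this

lemma buddy_pair_eq (p : Fin t × Bool) :
    s(Sum.inr p, Sum.inr (p.1, !p.2)) =
      s((Sum.inr (p.1, false) : A ⊕ Fin t × Bool), Sum.inr (p.1, true)) := by
  rcases p with ⟨j, b⟩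
  cases b
  · rfl
  · exact Sym2.eq_swap

lemma mem_U3_of_buddy (p : Fin t × Bool) :
    s(Sum.inr p, Sum.inr (p.1, !p.2)) ∈ U3 A t := by
  rw [buddy_pair_eq]
  exact Finset.mem_image.2 ⟨p.1, Finset.mem_univ _, rfl⟩

lemma forward_subset {M1 M2 : Finset (Sym2 A)} :
    symmDiff (extM6 M1 t en) (liftMat M2 t en) ⊆
      (symmDiff M1 M2).image (Sym2.map Sum.inl) ∪ U2 t en ∪ U3 A t := by
  intro e he
  have hor : e ∈ extM6 M1 t en ∨ e ∈ liftMat M2 t en := by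
    rw [Finset.mem_symmDiff] at he
    rcases he with ⟨h, -⟩ | ⟨h, -⟩
    · exact Or.inl h
    · exact Or.inr h
  rw [Finset.mem_symmDiff] at he
  induction e using Sym2.ind with
  | _ x y =>
    match x, y, he, hor with
    | Sum.inl a, Sum.inl b, he, hor =>
      refine Finset.mem_union_left _ (Finset.mem_union_left _ (Finset.mem_image.2
        ⟨s(a, b), ?_, by rw [Sym2.map_pair_eq]⟩))
      rw [Finset.mem_symmDiff]
      rcases he with ⟨h1, h2⟩ | ⟨h1, h2⟩
      · exact Or.inl ⟨mem_ext_ll.1 h1, fun hc => h2 (mem_lift_ll.2 hc)⟩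
      · exact Or.inr ⟨mem_lift_ll.1 h1, fun hc => h2 (mem_ext_ll.2 hc)⟩
    | Sum.inl a, Sum.inr p, he, hor =>
      have ha : a = en p := by
        rcases hor with h | h
        · exact mem_ext_lr.1 h
        · exact (mem_lift_lr.1 h).1
      subst ha
      exact Finset.mem_union_left _ (Finset.mem_union_right _
        (Finset.mem_image.2 ⟨p, Finset.mem_univ _, rfl⟩))
    | Sum.inr p, Sum.inl a, he, hor =>
      have ha : a = en p := by
        rcases hor with h | h
        · exact mem_ext_lr.1 (mem_swap h)
        · exact (mem_lift_lr.1 (mem_swap h)).1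
      subst ha
      rw [Sym2.eq_swap]
      exact Finset.mem_union_left _ (Finset.mem_union_right _
        (Finset.mem_image.2 ⟨p, Finset.mem_univ _, rfl⟩))
    | Sum.inr p, Sum.inr q, he, hor =>
      have hq : q = (p.1, !p.2) := by
        rcases hor with h | h
        · exact absurd h mem_ext_rr
        · exact (mem_lift_rr.1 h).1
      subst hq
      exact Finset.mem_union_right _ (mem_U3_of_buddy p)

lemma backward_superset {M1 : Finset (Sym2 A)} {M2' : Finset (Sym2 (A ⊕ Fin t × Bool))}
    (hnd : ∀ p : Fin t × Bool, s(Sum.inl (en p), Sum.inr p) ∉ M2')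
    (hbud : ∀ p : Fin t × Bool, s(Sum.inr p, Sum.inr (p.1, !p.2)) ∈ M2') :
    (symmDiff M1 (projM M2')).image (Sym2.map Sum.inl) ∪ U2 t en ∪ U3 A t ⊆
      symmDiff (extM6 M1 t en) M2' := by
  intro e he
  rw [Finset.mem_symmDiff]
  rcases Finset.mem_union.1 he with h | h
  · rcases Finset.mem_union.1 h with h | h
    · obtain ⟨d, hd, rfl⟩ := Finset.mem_image.1 h
      induction d using Sym2.ind with
      | _ a b =>
        rw [Finset.mem_symmDiff] at hd
        rw [Sym2.map_pair_eq]
        rcases hd with ⟨h1, h2⟩ | ⟨h1, h2⟩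
        · exact Or.inl ⟨mem_ext_ll.2 h1, fun hc => h2 (mem_projM.2 hc)⟩
        · exact Or.inr ⟨mem_projM.1 h1, fun hc => h2 (mem_ext_ll.1 hc)⟩
    · obtain ⟨p, -, rfl⟩ := Finset.mem_image.1 h
      exact Or.inl ⟨mem_ext_lr.2 rfl, hnd p⟩
  · obtain ⟨j, -, rfl⟩ := Finset.mem_image.1 h
    refine Or.inr ⟨?_, mem_ext_rr⟩
    have := hbud (j, false)
    exact this
end Ext4

section Ext5

set_option linter.unusedSectionVars false

variable {t : ℕ} {en : Fin t × Bool → A}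

lemma disj12 (D : Finset (Sym2 A)) :
    Disjoint (D.image (Sym2.map Sum.inl)) (U2 t en) := by
  rw [Finset.disjoint_left]
  intro e h1 h2
  obtain ⟨d, -, rfl⟩ := Finset.mem_image.1 h1
  obtain ⟨p, -, hp⟩ := Finset.mem_image.1 h2
  induction d using Sym2.ind with
  | _ a b => simp [Sym2.map_pair_eq, Sym2.eq_iff] at hp

lemma disj13 (D : Finset (Sym2 A)) :
    Disjoint (D.image (Sym2.map Sum.inl)) (U3 A t) := by
  rw [Finset.disjoint_left]
  intro e h1 h2
  obtain ⟨d, -, rfl⟩ := Finset.mem_image.1 h1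
  obtain ⟨j, -, hj⟩ := Finset.mem_image.1 h2
  induction d using Sym2.ind with
  | _ a b => simp [Sym2.map_pair_eq, Sym2.eq_iff] at hj

lemma disj23 : Disjoint (U2 t en) (U3 A t) := by
  rw [Finset.disjoint_left]
  intro e h1 h2
  obtain ⟨p, -, rfl⟩ := Finset.mem_image.1 h1
  obtain ⟨j, -, hj⟩ := Finset.mem_image.1 h2
  simp [Sym2.eq_iff] at hj

lemma card_rhs (D : Finset (Sym2 A)) :
    (D.image (Sym2.map Sum.inl) ∪ U2 t en ∪ U3 A t).card = D.card + 2 * t + t := by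
  rw [Finset.card_union_of_disjoint (Finset.disjoint_union_left.2 ⟨disj13 D, disj23⟩),
    Finset.card_union_of_disjoint (disj12 D),
    Finset.card_image_of_injective _ (Sym2.map.injective Sum.inl_injective),
    card_U2, card_U3]

lemma extM6_eq_lift {M1 : Finset (Sym2 A)} (hr : ∀ p : Fin t × Bool, ¬ Matched M1 (en p)) :
    extM6 M1 t en = liftMat M1 t en := by
  unfold extM6 liftMat
  have h1 : (Finset.univ.filter fun p : Fin t × Bool => ¬ Matched M1 (en p)) =
      (Finset.univ : Finset (Fin t × Bool)) :=
    Finset.filter_true_of_mem (fun p _ => hr p)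
  have h2 : (Finset.univ.filter fun j : Fin t =>
      Matched M1 (en (j, false)) ∧ Matched M1 (en (j, true))) = ∅ := by
    rw [Finset.filter_eq_empty_iff]
    rintro j - ⟨h, -⟩
    exact hr _ h
  rw [h1, h2, Finset.image_empty, Finset.union_empty]

end Ext5

theorem stmt6' (P1 P2 : PrefProfile A)
    (hl1 : P1.Lawful) (hl2 : P2.Lawful) (hs1 : P1.Strict) (hs2 : P2.Strict)
    (M1 : Finset (Sym2 A)) (hM1 : IsStable P1 M1) (k : ℕ)
    (t : ℕ) (en : Fin t × Bool → A) (hinj : Function.Injective en)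
    (hrange : ∀ a : A, ¬ Matched M1 a ↔ a ∈ Set.range en)
    (hex : ∃ M : Finset (Sym2 A), IsStable P2 M ∧ IsPerfect M) :
    (IsStable (extProfile6 P1 t en) (extM6 M1 t en) ∧ IsPerfect (extM6 M1 t en)) ∧
    (∃ M, IsStable (extProfile6 P2 t en) M ∧ IsPerfect M) ∧
    ((∃ M2, IsStable P2 M2 ∧ (symmDiff M1 M2).card ≤ k) ↔
     (∃ M2', IsStable (extProfile6 P2 t en) M2' ∧
        (symmDiff (extM6 M1 t en) M2').card ≤ k + 3 * t)) := by
  have hr : ∀ p : Fin t × Bool, ¬ Matched M1 (en p) := fun p => (hrange (en p)).2 ⟨p, rfl⟩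
  refine ⟨⟨?_, ?_⟩, ?_, ?_, ?_⟩
  · rw [extM6_eq_lift hr]
    exact lift_stable P1 hM1 hinj
  · -- perfection of M1'
    intro x
    match x with
    | Sum.inl a =>
      by_cases hm : Matched M1 a
      · obtain ⟨c, hc⟩ := hm
        exact ⟨Sum.inl c, mem_ext_ll.2 hc⟩
      · obtain ⟨p, rfl⟩ := (hrange a).1 hm
        exact ⟨Sum.inr p, mem_ext_lr.2 rfl⟩
    | Sum.inr p => exact ⟨Sum.inl (en p), mem_swap (mem_ext_lr.2 rfl)⟩
  · -- perfect stable matching for the extended second profile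
    obtain ⟨M, hMs, hMp⟩ := hex
    exact ⟨liftMat M t en, lift_stable P2 hMs hinj, lift_perfect hMp⟩
  · -- forward direction
    rintro ⟨M2, hM2s, hM2c⟩
    refine ⟨liftMat M2 t en, lift_stable P2 hM2s hinj, ?_⟩
    have c1 := Finset.card_le_card (forward_subset (M1 := M1) (M2 := M2) (t := t) (en := en))
    have c2 := Finset.card_union_le
      ((symmDiff M1 M2).image (Sym2.map (Sum.inl : A → A ⊕ Fin t × Bool)) ∪ U2 t en) (U3 A t)
    have c3 := Finset.card_union_le ((symmDiff M1 M2).image (Sym2.map (Sum.inl : A → A ⊕ Fin t × Bool))) (U2 t en)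
    have c4 : ((symmDiff M1 M2).image (Sym2.map (Sum.inl : A → A ⊕ Fin t × Bool))).card ≤ k :=
      le_trans Finset.card_image_le hM2c
    have c5 := card_U2_le (t := t) (en := en)
    have c6 := card_U3_le (A := A) (t := t)
    omega
  · -- backward direction
    rintro ⟨M2', hM2's, hM2'c⟩
    have hM2s : IsStable P2 (projM M2') := proj_stable P2 hM2's
    obtain ⟨Mp, hMps, hMpp⟩ := hex
    have hM2p : IsPerfect (projM M2') := lone_wolf P2 hs2 hM2s hMps hMpp
    have hbud := buddy_matched P2 hM2's (fun p => hM2p (en p))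
    have hnodummy : ∀ p : Fin t × Bool, s(Sum.inl (en p), Sum.inr p) ∉ M2' := by
      intro p hp
      have := hM2's.1.2 (Sum.inr p) (Sum.inl (en p)) (Sum.inr (p.1, !p.2))
        (mem_swap hp) (hbud p)
      simp at this
    have c1 := Finset.card_le_card (backward_superset (M1 := M1) hnodummy hbud)
    rw [card_rhs] at c1
    exact ⟨projM M2', hM2s, by omega⟩


/-- Reducing an ISR instance whose second profile admits a perfect stable matching to
one where moreover the given initial matching is perfect: with `x = 2t` agents
unmatched by `M1` (enumerated by the injection `en`), (a) `M1'` is a perfect stable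
matching for `P1'`; (b) `P2'` admits a perfect stable matching; (c) there is a stable
matching for `P2` within symmetric difference `k` of `M1` iff there is a stable
matching for `P2'` within symmetric difference `k + 3x/2 = k + 3t` of `M1'`. -/theorem stmt6 (P1 P2 : PrefProfile A)
    (hl1 : P1.Lawful) (hl2 : P2.Lawful) (hs1 : P1.Strict) (hs2 : P2.Strict)
    (M1 : Finset (Sym2 A)) (hM1 : IsStable P1 M1) (k : ℕ)
    (t : ℕ) (en : Fin t × Bool → A) (hinj : Function.Injective en)
    (hrange : ∀ a : A, ¬ Matched M1 a ↔ a ∈ Set.range en)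
    (hex : ∃ M : Finset (Sym2 A), IsStable P2 M ∧ IsPerfect M) :
    (IsStable (extProfile6 P1 t en) (extM6 M1 t en) ∧ IsPerfect (extM6 M1 t en)) ∧
    (∃ M, IsStable (extProfile6 P2 t en) M ∧ IsPerfect M) ∧
    ((∃ M2, IsStable P2 M2 ∧ (symmDiff M1 M2).card ≤ k) ↔
     (∃ M2', IsStable (extProfile6 P2 t en) M2' ∧
        (symmDiff (extM6 M1 t en) M2').card ≤ k + 3 * t)) :=
  stmt6' P1 P2 hl1 hl2 hs1 hs2 M1 hM1 k t en hinj hrange hex
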